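/- Let K_B > 0, m_s, m_k > 0, n_s, n_k > 0, λ_{sk} > 0, u_s, u_k ∈ ℝ³, T_s, T_k > 0, and let f_s : ℝ³ → ℝ be integrable with ∫ f_s(v) dv = n_s, ∫ v f_s(v) dv = n_s u_s, and ∫ |v|² f_s(v) dv = n_s |u_s|² + 3 n_s K_B T_s/m_s, with |v|² f_s integrable. Set ν_{sk} = λ_{sk} n_k, a_{sk} = m_k/(m_s+m_k), u_{sk} = (1−a_{sk}) u_s + a_{sk} u_k, b_{sk} = 2a_{sk}m_s/(m_s+m_k), γ_{sk} = (m_s a_{sk}/3)(2m_k/(m_s+m_k)−a_{sk}), T_{sk} = (1−b_{sk})T_s + b_{sk}T_k + (γ_{sk}/K_B)|u_s−u_k|², and M(v;a,b) = (2πb)^{−3/2} exp(−|v−a|²/(2b)). Then the energy exchange rate of the BBGSP bi-species operator equals ∫ (m_s|v|²/2) ν_{sk} ( n_s M(v; u_{sk}, K_B T_{sk}/m_s) − f_s(v) ) dv = λ_{sk} (m_s m_k/(m_s+m_k)²) n_s n_k [ (m_s u_s + m_k u_k)·(u_k − u_s) + 3K_B (T_k − T_s) ] =: 𝓢_{sk};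 in particular, if λ_{sk} = λ_{ks} then 𝓢_{sk} + 𝓢_{ks} = 0, so the BBGSP model conserves total kinetic energy. -/

import Mathlib

open MeasureTheory RealInnerProductSpace

section Aux

open Real Set


lemma I2_val {b : ℝ} (hb : 0 < b) :
    ∫ x : ℝ, x ^ 2 * exp (-b * x ^ 2) = Real.sqrt (π / b) / (2 * b) := by
  have h1 : ∫ x in Ioi (0:ℝ), x ^ 2 * exp (-b * x ^ 2)
      = b ^ (-(3:ℝ)/2) * (1/2) * Real.Gamma (3/2) := by
    have := integral_rpow_mul_exp_neg_mul_rpow (p := 2) (q := 2) two_pos (by norm_num) hb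
    rw [show ((2:ℝ)+1)/2 = 3/2 by norm_num, show -((2:ℝ)+1)/2 = -(3:ℝ)/2 by norm_num] at this
    rw [← this]
    refine setIntegral_congr_fun measurableSet_Ioi (fun x hx => ?_)
    norm_num [show ((2:ℝ)) = ((2:ℕ):ℝ) by norm_num, Real.rpow_natCast]
  have heven : ∫ x : ℝ, x ^ 2 * exp (-b * x ^ 2)
      = 2 * ∫ x in Ioi (0:ℝ), x ^ 2 * exp (-b * x ^ 2) := by
    rw [← integral_comp_abs (f := fun t => t ^ 2 * exp (-b * t ^ 2))]
    simp [sq_abs]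
  have hgamma : Real.Gamma (3/2) = Real.sqrt π / 2 := by
    rw [show (3:ℝ)/2 = 1/2 + 1 by norm_num, Real.Gamma_add_one (by norm_num),
      Real.Gamma_one_half_eq]
    ring
  rw [heven, h1, hgamma, Real.sqrt_div pi_pos.le]
  simp only [Real.sqrt_eq_rpow]
  have h2 : b ^ (-(3:ℝ)/2) = (b ^ ((1:ℝ)/2))⁻¹ * b⁻¹ := by
    rw [← Real.rpow_neg_one b, ← Real.rpow_neg hb.le, ← Real.rpow_add hb]
    norm_num
  have h3 : b ^ ((1:ℝ)/2) ≠ 0 := by positivity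
  rw [h2]
  field_simp


lemma gauss3d {b : ℝ} (hb : 0 < b) :
    Integrable (fun v : EuclideanSpace ℝ (Fin 3) => exp (-b * ‖v‖ ^ 2)) ∧
    Integrable (fun v : EuclideanSpace ℝ (Fin 3) => ‖v‖ ^ 2 * exp (-b * ‖v‖ ^ 2)) ∧
    (∫ v : EuclideanSpace ℝ (Fin 3), exp (-b * ‖v‖ ^ 2)) = Real.sqrt (π / b) ^ 3 ∧
    (∫ v : EuclideanSpace ℝ (Fin 3), ‖v‖ ^ 2 * exp (-b * ‖v‖ ^ 2))
      = 3 / (2 * b) * Real.sqrt (π / b) ^ 3 := by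
  have i0 : Integrable fun x : ℝ => exp (-b * x ^ 2) := integrable_exp_neg_mul_sq hb
  have i2 : Integrable fun x : ℝ => x ^ 2 * exp (-b * x ^ 2) := by
    have := integrable_rpow_mul_exp_neg_mul_sq hb (s := 2) (by norm_num)
    simpa [Real.rpow_natCast] using this
  have e : MeasurePreserving (MeasurableEquiv.toLp 2 (Fin 3 → ℝ)) :=
    (EuclideanSpace.volume_preserving_symm_measurableEquiv_toLp (Fin 3)).symm
  have hemb := MeasurableEquiv.measurableEmbedding
    (MeasurableEquiv.toLp 2 (Fin 3 → ℝ))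
  have hnorm : ∀ x : Fin 3 → ℝ,
      ‖(MeasurableEquiv.toLp 2 (Fin 3 → ℝ)) x‖ ^ 2 = ∑ i, x i ^ 2 := by
    intro x
    simp only [MeasurableEquiv.coe_toLp,
      EuclideanSpace.norm_eq, PiLp.toLp_apply, Real.norm_eq_abs, sq_abs]
    rw [sq_sqrt]
    exact Finset.sum_nonneg fun i _ => sq_nonneg _
  -- the pi-side functions
  set F : Fin 3 → (Fin 3 → ℝ) → ℝ :=
    fun i x => ∏ j, ((if i = j then x j ^ 2 else 1) * exp (-b * x j ^ 2)) with hF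
  have hFint : ∀ i, Integrable (F i) := by
    intro i
    apply Integrable.fintype_prod (f := fun j t => (if i = j then t ^ 2 else 1) * exp (-b * t ^ 2))
    intro j
    rcases eq_or_ne i j with h | h
    · simpa [h] using i2
    · simpa [h] using i0
  have hFval : ∀ i, ∫ x : Fin 3 → ℝ, F i x
      = (∫ x : ℝ, x ^ 2 * exp (-b * x ^ 2)) * (∫ x : ℝ, exp (-b * x ^ 2)) ^ 2 := by
    intro i
    rw [hF]
    beta_reduce
    rw [integral_fintype_prod_volume_eq_prod (ι := Fin 3)
      (fun j t => (if i = j then t ^ 2 else 1) * exp (-b * t ^ 2))]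
    have : ∀ j, (∫ t : ℝ, (if i = j then t ^ 2 else 1) * exp (-b * t ^ 2))
        = if i = j then ∫ t : ℝ, t ^ 2 * exp (-b * t ^ 2) else ∫ t : ℝ, exp (-b * t ^ 2) := by
      intro j; rcases eq_or_ne i j with h | h <;> simp [h]
    simp_rw [this]
    fin_cases i <;> simp [Fin.prod_univ_three, Fin.ext_iff] <;> ring
  have hprod0 : ∀ x : Fin 3 → ℝ, exp (-b * ∑ i, x i ^ 2) = ∏ i, exp (-b * x i ^ 2) := by
    intro x
    rw [← Real.exp_sum]
    congr 1
    rw [Finset.mul_sum]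
  have hsum : ∀ x : Fin 3 → ℝ,
      (∑ i, x i ^ 2) * exp (-b * ∑ i, x i ^ 2) = ∑ i, F i x := by
    intro x
    rw [hprod0, Finset.sum_mul]
    refine Finset.sum_congr rfl fun i _ => ?_
    simp only [hF]
    rw [Finset.prod_mul_distrib, Finset.prod_ite_eq]
    simp
  -- zeroth moment
  have key0i : Integrable (fun x : Fin 3 → ℝ => exp (-b * ∑ i, x i ^ 2)) := by
    have := Integrable.fintype_prod (f := fun _ : Fin 3 => fun t : ℝ => exp (-b * t ^ 2))
      (fun _ => i0)
    apply this.congr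
    filter_upwards with x
    rw [hprod0]
  have key2i : Integrable (fun x : Fin 3 → ℝ => (∑ i, x i ^ 2) * exp (-b * ∑ i, x i ^ 2)) := by
    have : Integrable (fun x : Fin 3 → ℝ => ∑ i, F i x) :=
      integrable_finset_sum _ fun i _ => hFint i
    apply this.congr
    filter_upwards with x
    rw [hsum]
  have key0v : (∫ x : Fin 3 → ℝ, exp (-b * ∑ i, x i ^ 2))
      = (∫ x : ℝ, exp (-b * x ^ 2)) ^ 3 := by
    calc ∫ x : Fin 3 → ℝ, exp (-b * ∑ i, x i ^ 2)
        = ∫ x : Fin 3 → ℝ, ∏ i, exp (-b * x i ^ 2) := by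
          exact integral_congr_ae (Filter.Eventually.of_forall fun x => hprod0 x)
      _ = (∫ x : ℝ, exp (-b * x ^ 2)) ^ 3 := by
          rw [integral_fintype_prod_volume_eq_pow (ι := Fin 3) (fun t : ℝ => exp (-b * t ^ 2))]
          norm_num
  have key2v : (∫ x : Fin 3 → ℝ, (∑ i, x i ^ 2) * exp (-b * ∑ i, x i ^ 2))
      = 3 * ((∫ x : ℝ, x ^ 2 * exp (-b * x ^ 2)) * (∫ x : ℝ, exp (-b * x ^ 2)) ^ 2) := by
    calc ∫ x : Fin 3 → ℝ, (∑ i, x i ^ 2) * exp (-b * ∑ i, x i ^ 2)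
        = ∫ x : Fin 3 → ℝ, ∑ i, F i x := by
          exact integral_congr_ae (Filter.Eventually.of_forall fun x => hsum x)
      _ = ∑ i : Fin 3, ∫ x : Fin 3 → ℝ, F i x :=
          integral_finset_sum _ fun i _ => hFint i
      _ = _ := by simp [hFval]; try ring
  -- transfer back
  have T0 : Integrable (fun v : EuclideanSpace ℝ (Fin 3) => exp (-b * ‖v‖ ^ 2)) := by
    rw [← e.integrable_comp_emb hemb]
    apply key0i.congr
    filter_upwards with x
    simp only [Function.comp_apply]
    rw [hnorm x]
  have T2 : Integrable (fun v : EuclideanSpace ℝ (Fin 3) => ‖v‖ ^ 2 * exp (-b * ‖v‖ ^ 2)) := by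
    rw [← e.integrable_comp_emb hemb]
    apply key2i.congr
    filter_upwards with x
    simp only [Function.comp_apply]
    rw [hnorm x]
  have V0 : (∫ v : EuclideanSpace ℝ (Fin 3), exp (-b * ‖v‖ ^ 2))
      = Real.sqrt (π / b) ^ 3 := by
    rw [← e.integral_comp hemb]
    have step : ∀ x : Fin 3 → ℝ,
        exp (-b * ‖(MeasurableEquiv.toLp 2 (Fin 3 → ℝ)) x‖ ^ 2)
        = exp (-b * ∑ i, x i ^ 2) := fun x => by rw [hnorm]
    calc ∫ x : Fin 3 → ℝ, exp (-b * ‖(MeasurableEquiv.toLp 2 (Fin 3 → ℝ)) x‖ ^ 2)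
        = ∫ x : Fin 3 → ℝ, exp (-b * ∑ i, x i ^ 2) := by
          exact integral_congr_ae (Filter.Eventually.of_forall step)
      _ = Real.sqrt (π / b) ^ 3 := by rw [key0v, integral_gaussian]
  have V2 : (∫ v : EuclideanSpace ℝ (Fin 3), ‖v‖ ^ 2 * exp (-b * ‖v‖ ^ 2))
      = 3 / (2 * b) * Real.sqrt (π / b) ^ 3 := by
    rw [← e.integral_comp hemb]
    have step : ∀ x : Fin 3 → ℝ,
        ‖(MeasurableEquiv.toLp 2 (Fin 3 → ℝ)) x‖ ^ 2
          * exp (-b * ‖(MeasurableEquiv.toLp 2 (Fin 3 → ℝ)) x‖ ^ 2)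
        = (∑ i, x i ^ 2) * exp (-b * ∑ i, x i ^ 2) := fun x => by rw [hnorm]
    calc ∫ x : Fin 3 → ℝ, ‖(MeasurableEquiv.toLp 2 (Fin 3 → ℝ)) x‖ ^ 2
          * exp (-b * ‖(MeasurableEquiv.toLp 2 (Fin 3 → ℝ)) x‖ ^ 2)
        = ∫ x : Fin 3 → ℝ, (∑ i, x i ^ 2) * exp (-b * ∑ i, x i ^ 2) := by
          exact integral_congr_ae (Filter.Eventually.of_forall step)
      _ = 3 / (2 * b) * Real.sqrt (π / b) ^ 3 := by
          rw [key2v, integral_gaussian, I2_val hb, Real.sqrt_div pi_pos.le]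
          have h3 : Real.sqrt b ≠ 0 := by positivity
          rw [show (Real.sqrt π / Real.sqrt b) ^ 3
              = (Real.sqrt π ^ 2 / Real.sqrt b ^ 2) * (Real.sqrt π / Real.sqrt b) from by ring,
            Real.sq_sqrt pi_pos.le, Real.sq_sqrt hb.le]
          field_simp
          rw [Real.sq_sqrt pi_pos.le, Real.sq_sqrt hb.le]
          ring
  exact ⟨T0, T2, V0, V2⟩

end Aux

section Aux2

open Real

lemma maxwell_moment (c : EuclideanSpace ℝ (Fin 3)) {d : ℝ} (hd : 0 < d) :
    Integrable (fun v : EuclideanSpace ℝ (Fin 3) =>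
      ‖v‖ ^ 2 * ((2 * π * d) ^ (-(3:ℝ)/2) * exp (-‖v - c‖ ^ 2 / (2 * d)))) ∧
    (∫ v : EuclideanSpace ℝ (Fin 3),
      ‖v‖ ^ 2 * ((2 * π * d) ^ (-(3:ℝ)/2) * exp (-‖v - c‖ ^ 2 / (2 * d))))
      = ‖c‖ ^ 2 + 3 * d := by
  set b : ℝ := (2 * d)⁻¹ with hbdef
  have hb : 0 < b := by positivity
  obtain ⟨T0, T2, V0, V2⟩ := gauss3d hb
  set K : ℝ := (2 * π * d) ^ (-(3:ℝ)/2) with hKdef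
  have hexp : ∀ w : EuclideanSpace ℝ (Fin 3),
      exp (-‖w‖ ^ 2 / (2 * d)) = exp (-b * ‖w‖ ^ 2) := by
    intro w
    congr 1
    rw [hbdef]
    field_simp
  have h2πd : (0:ℝ) < 2 * π * d := by positivity
  have hπb : π / b = 2 * π * d := by rw [hbdef]; field_simp
  have hKnorm : K * Real.sqrt (π / b) ^ 3 = 1 := by
    rw [hπb, hKdef, Real.sqrt_eq_rpow, ← Real.rpow_natCast ((2 * π * d) ^ ((1:ℝ)/2)) 3,
      ← Real.rpow_mul h2πd.le, ← Real.rpow_add h2πd]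
    norm_num
  -- the shifted integrand
  set W : EuclideanSpace ℝ (Fin 3) → ℝ := fun w => ‖w + c‖ ^ 2 * exp (-b * ‖w‖ ^ 2) with hWdef
  have hWcont : Continuous W := by
    rw [hWdef]; fun_prop
  have hWint : Integrable W := by
    apply Integrable.mono' (((T2.const_mul 2).add (T0.const_mul (2 * ‖c‖ ^ 2))))
      hWcont.aestronglyMeasurable
    filter_upwards with w
    rw [hWdef]
    have h1 : ‖w + c‖ ≤ ‖w‖ + ‖c‖ := norm_add_le _ _
    have h2 : (0:ℝ) < exp (-b * ‖w‖ ^ 2) := exp_pos _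
    have h3 : ‖w + c‖ ^ 2 ≤ 2 * ‖w‖ ^ 2 + 2 * ‖c‖ ^ 2 := by
      have := mul_self_le_mul_self (norm_nonneg (w + c)) h1
      nlinarith [sq_nonneg (‖w‖ - ‖c‖)]
    have h4 : ‖‖w + c‖ ^ 2 * exp (-b * ‖w‖ ^ 2)‖ = ‖w + c‖ ^ 2 * exp (-b * ‖w‖ ^ 2) := by
      rw [norm_mul, norm_pow, norm_norm, Real.norm_eq_abs, abs_of_pos h2]
    rw [h4]
    simp only [Pi.add_apply]
    nlinarith [mul_le_mul_of_nonneg_right h3 h2.le]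
  -- integrability of inner-product cross term
  have hIinner : Integrable (fun w : EuclideanSpace ℝ (Fin 3) => ⟪w, c⟫ * exp (-b * ‖w‖ ^ 2)) := by
    apply Integrable.mono' ((T0.const_mul ‖c‖).add (T2.const_mul ‖c‖))
    · exact ((continuous_id.inner continuous_const).mul (by fun_prop)).aestronglyMeasurable
    · filter_upwards with w
      have h2 : (0:ℝ) < exp (-b * ‖w‖ ^ 2) := exp_pos _
      have h5 : |⟪w, c⟫| ≤ ‖w‖ * ‖c‖ := abs_real_inner_le_norm w c
      have h6 : ‖w‖ ≤ 1 + ‖w‖ ^ 2 := by nlinarith [norm_nonneg w, sq_nonneg (‖w‖ - 1)]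
      rw [norm_mul, Real.norm_eq_abs (exp _), abs_of_pos h2, Real.norm_eq_abs]
      have := mul_le_mul_of_nonneg_right h5 h2.le
      have h7 : ‖w‖ * ‖c‖ * exp (-b * ‖w‖ ^ 2) ≤ (1 + ‖w‖ ^ 2) * ‖c‖ * exp (-b * ‖w‖ ^ 2) :=
        mul_le_mul_of_nonneg_right (mul_le_mul_of_nonneg_right h6 (norm_nonneg c)) h2.le
      simp only [Pi.add_apply]
      calc |⟪w, c⟫| * exp (-b * ‖w‖ ^ 2) ≤ ‖w‖ * ‖c‖ * exp (-b * ‖w‖ ^ 2) := this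
        _ ≤ (1 + ‖w‖ ^ 2) * ‖c‖ * exp (-b * ‖w‖ ^ 2) := h7
        _ = ‖c‖ * exp (-b * ‖w‖ ^ 2) + ‖c‖ * (‖w‖ ^ 2 * exp (-b * ‖w‖ ^ 2)) := by ring
  -- cross term integrates to zero
  have hIzero : (∫ w : EuclideanSpace ℝ (Fin 3), ⟪w, c⟫ * exp (-b * ‖w‖ ^ 2)) = 0 := by
    have hneg : (∫ w : EuclideanSpace ℝ (Fin 3), ⟪w, c⟫ * exp (-b * ‖w‖ ^ 2))
        = ∫ w : EuclideanSpace ℝ (Fin 3), ⟪-w, c⟫ * exp (-b * ‖-w‖ ^ 2) :=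
      (integral_neg_eq_self
        (fun w : EuclideanSpace ℝ (Fin 3) => ⟪w, c⟫ * exp (-b * ‖w‖ ^ 2)) volume).symm
    have : ∀ w : EuclideanSpace ℝ (Fin 3),
        ⟪-w, c⟫ * exp (-b * ‖-w‖ ^ 2) = -(⟪w, c⟫ * exp (-b * ‖w‖ ^ 2)) := by
      intro w
      rw [inner_neg_left, norm_neg]
      ring
    have h2' : (∫ w : EuclideanSpace ℝ (Fin 3), ⟪w, c⟫ * exp (-b * ‖w‖ ^ 2))
        = -∫ w : EuclideanSpace ℝ (Fin 3), ⟪w, c⟫ * exp (-b * ‖w‖ ^ 2) := by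
      calc (∫ w : EuclideanSpace ℝ (Fin 3), ⟪w, c⟫ * exp (-b * ‖w‖ ^ 2))
          = ∫ w : EuclideanSpace ℝ (Fin 3), ⟪-w, c⟫ * exp (-b * ‖-w‖ ^ 2) := hneg
        _ = ∫ w : EuclideanSpace ℝ (Fin 3), -(⟪w, c⟫ * exp (-b * ‖w‖ ^ 2)) :=
          integral_congr_ae (Filter.Eventually.of_forall this)
        _ = -∫ w : EuclideanSpace ℝ (Fin 3), ⟪w, c⟫ * exp (-b * ‖w‖ ^ 2) := integral_neg _
    linarith [h2']
  -- value of ∫ W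
  have hWval : (∫ w, W w) = Real.sqrt (π / b) ^ 3 * (3 / (2 * b) + ‖c‖ ^ 2) := by
    have hsplit : ∀ w : EuclideanSpace ℝ (Fin 3), W w
        = ‖w‖ ^ 2 * exp (-b * ‖w‖ ^ 2) + ((2 * ⟪w, c⟫) * exp (-b * ‖w‖ ^ 2)
          + ‖c‖ ^ 2 * exp (-b * ‖w‖ ^ 2)) := by
      intro w
      simp only [hWdef]
      have : ‖w + c‖ ^ 2 = ‖w‖ ^ 2 + 2 * ⟪w, c⟫ + ‖c‖ ^ 2 := norm_add_sq_real w c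
      rw [this]; ring
    calc (∫ w, W w) = ∫ w : EuclideanSpace ℝ (Fin 3), (‖w‖ ^ 2 * exp (-b * ‖w‖ ^ 2)
          + ((2 * ⟪w, c⟫) * exp (-b * ‖w‖ ^ 2) + ‖c‖ ^ 2 * exp (-b * ‖w‖ ^ 2))) :=
        integral_congr_ae (Filter.Eventually.of_forall hsplit)
      _ = (∫ w : EuclideanSpace ℝ (Fin 3), ‖w‖ ^ 2 * exp (-b * ‖w‖ ^ 2))
          + ((∫ w : EuclideanSpace ℝ (Fin 3), (2 * ⟪w, c⟫) * exp (-b * ‖w‖ ^ 2))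
          + ∫ w : EuclideanSpace ℝ (Fin 3), ‖c‖ ^ 2 * exp (-b * ‖w‖ ^ 2)) := by
        rw [integral_add T2]
        · rw [integral_add]
          · have : (fun w : EuclideanSpace ℝ (Fin 3) => (2 * ⟪w, c⟫) * exp (-b * ‖w‖ ^ 2))
                = fun w => 2 * (⟪w, c⟫ * exp (-b * ‖w‖ ^ 2)) := by funext w; ring
            rw [this]
            exact hIinner.const_mul 2
          · exact T0.const_mul _
        · apply Integrable.add
          · have : (fun w : EuclideanSpace ℝ (Fin 3) => (2 * ⟪w, c⟫) * exp (-b * ‖w‖ ^ 2))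
                = fun w => 2 * (⟪w, c⟫ * exp (-b * ‖w‖ ^ 2)) := by funext w; ring
            rw [this]
            exact hIinner.const_mul 2
          · exact T0.const_mul _
      _ = Real.sqrt (π / b) ^ 3 * (3 / (2 * b) + ‖c‖ ^ 2) := by
        have e1 : (∫ w : EuclideanSpace ℝ (Fin 3), (2 * ⟪w, c⟫) * exp (-b * ‖w‖ ^ 2)) = 0 := by
          have : (fun w : EuclideanSpace ℝ (Fin 3) => (2 * ⟪w, c⟫) * exp (-b * ‖w‖ ^ 2))
              = fun w => 2 * (⟪w, c⟫ * exp (-b * ‖w‖ ^ 2)) := by funext w; ring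
          rw [this, integral_const_mul, hIzero, mul_zero]
        have e2 : (∫ w : EuclideanSpace ℝ (Fin 3), ‖c‖ ^ 2 * exp (-b * ‖w‖ ^ 2))
            = ‖c‖ ^ 2 * Real.sqrt (π / b) ^ 3 := by rw [integral_const_mul, V0]
        rw [e1, e2, V2]; ring
  -- relate the target to W
  have hshift : ∀ v : EuclideanSpace ℝ (Fin 3),
      ‖v‖ ^ 2 * (K * exp (-‖v - c‖ ^ 2 / (2 * d))) = K * W (v - c) := by
    intro v
    rw [hexp, hWdef]
    simp only [sub_add_cancel]
    ring
  have hint : Integrable (fun v : EuclideanSpace ℝ (Fin 3) =>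
      ‖v‖ ^ 2 * (K * exp (-‖v - c‖ ^ 2 / (2 * d)))) := by
    apply Integrable.congr ((hWint.comp_sub_right c).const_mul K)
    filter_upwards with v
    rw [hshift v]
  refine ⟨hint, ?_⟩
  calc (∫ v : EuclideanSpace ℝ (Fin 3), ‖v‖ ^ 2 * (K * exp (-‖v - c‖ ^ 2 / (2 * d))))
      = ∫ v : EuclideanSpace ℝ (Fin 3), K * W (v - c) :=
        integral_congr_ae (Filter.Eventually.of_forall hshift)
    _ = K * ∫ v : EuclideanSpace ℝ (Fin 3), W (v - c) := integral_const_mul _ _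
    _ = K * ∫ w, W w := by rw [integral_sub_right_eq_self W c]
    _ = ‖c‖ ^ 2 + 3 * d := by
        rw [hWval, ← mul_assoc, hKnorm, one_mul]
        have : 3 / (2 * b) = 3 * d := by rw [hbdef]; field_simp
        rw [this]; ring

end Aux2

theorem bbgsp_energy_exchange_rate
    (KB ms mk ns nk lamsk lamks : ℝ) (hKB : 0 < KB) (hms : 0 < ms) (hmk : 0 < mk)
    (hns : 0 < ns) (hnk : 0 < nk) (hlamsk : 0 < lamsk)
    (us uk : EuclideanSpace ℝ (Fin 3)) (Ts Tk : ℝ) (hTs : 0 < Ts) (hTk : 0 < Tk)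
    (fs : EuclideanSpace ℝ (Fin 3) → ℝ)
    (hfint : Integrable fs)
    (hfvint : Integrable (fun v => fs v • v))
    (hfv2int : Integrable (fun v => ‖v‖ ^ 2 * fs v))
    (hf0 : ∫ v, fs v = ns)
    (hf1 : (∫ v, fs v • v) = ns • us)
    (hf2 : ∫ v, ‖v‖ ^ 2 * fs v = ns * ‖us‖ ^ 2 + 3 * ns * KB * Ts / ms)
    (νsk : ℝ) (hνsk : νsk = lamsk * nk)
    (a : ℝ) (ha : a = mk / (ms + mk))
    (usk : EuclideanSpace ℝ (Fin 3)) (husk : usk = (1 - a) • us + a • uk)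
    (b : ℝ) (hb : b = 2 * a * ms / (ms + mk))
    (γ : ℝ) (hγ : γ = ms * a / 3 * (2 * mk / (ms + mk) - a))
    (Tsk : ℝ) (hTsk : Tsk = (1 - b) * Ts + b * Tk + γ / KB * ‖us - uk‖ ^ 2)
    (Mx : EuclideanSpace ℝ (Fin 3) → EuclideanSpace ℝ (Fin 3) → ℝ → ℝ)
    (hMx : ∀ v c d, Mx v c d = (2 * Real.pi * d) ^ (-(3 : ℝ) / 2)
      * Real.exp (-‖v - c‖ ^ 2 / (2 * d)))
    (Ssk Sks : ℝ)
    (hSsk : Ssk = lamsk * (ms * mk / (ms + mk) ^ 2) * ns * nk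
      * (⟪ms • us + mk • uk, uk - us⟫ + 3 * KB * (Tk - Ts)))
    (hSks : Sks = lamks * (mk * ms / (mk + ms) ^ 2) * nk * ns
      * (⟪mk • uk + ms • us, us - uk⟫ + 3 * KB * (Ts - Tk))) :
    (∫ v, ms * ‖v‖ ^ 2 / 2 * (νsk * (ns * Mx v usk (KB * Tsk / ms) - fs v))) = Ssk
      ∧ (lamsk = lamks → Ssk + Sks = 0) := by
  have hM : (0:ℝ) < ms + mk := by linarith
  -- positivity of Tsk
  have hbval : b = 2 * ms * mk / (ms + mk) ^ 2 := by rw [hb, ha]; field_simp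
  have hbpos : 0 < b := by rw [hbval]; positivity
  have h1b : 0 < 1 - b := by
    have : 1 - b = (ms ^ 2 + mk ^ 2) / (ms + mk) ^ 2 := by rw [hbval]; field_simp; ring
    rw [this]; positivity
  have hγval : γ = ms * a ^ 2 / 3 := by rw [hγ, ha]; field_simp; ring
  have hγpos : 0 ≤ γ := by rw [hγval]; positivity
  have hTskpos : 0 < Tsk := by
    rw [hTsk]
    have t1 : 0 < (1 - b) * Ts := mul_pos h1b hTs
    have t2 : 0 < b * Tk := mul_pos hbpos hTk
    have t3 : 0 ≤ γ / KB * ‖us - uk‖ ^ 2 := by positivity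
    linarith
  have hd : 0 < KB * Tsk / ms := by positivity
  obtain ⟨Mint, Mval⟩ := maxwell_moment usk hd
  -- scalar abbreviations
  have hsub : ‖us - uk‖ ^ 2 = ‖us‖ ^ 2 - 2 * ⟪us, uk⟫ + ‖uk‖ ^ 2 := norm_sub_sq_real us uk
  have husk2 : ‖usk‖ ^ 2 = (1 - a) ^ 2 * ‖us‖ ^ 2 + 2 * ((1 - a) * (a * ⟪us, uk⟫))
      + a ^ 2 * ‖uk‖ ^ 2 := by
    rw [husk, norm_add_sq_real, real_inner_smul_left, real_inner_smul_right,
      norm_smul, norm_smul]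
    simp [mul_pow, sq_abs]
  have hinner : (⟪ms • us + mk • uk, uk - us⟫ : ℝ)
      = ms * ⟪us, uk⟫ - ms * ‖us‖ ^ 2 + mk * ‖uk‖ ^ 2 - mk * ⟪us, uk⟫ := by
    simp only [inner_add_left, inner_sub_right, real_inner_smul_left,
      real_inner_self_eq_norm_sq, real_inner_comm uk us]
    ring
  constructor
  · -- main integral
    have key : (∫ v, ms * ‖v‖ ^ 2 / 2 * (νsk * (ns * Mx v usk (KB * Tsk / ms) - fs v)))
        = ms * νsk / 2 * (ns * (‖usk‖ ^ 2 + 3 * (KB * Tsk / ms))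
          - (ns * ‖us‖ ^ 2 + 3 * ns * KB * Ts / ms)) := by
      simp only [hMx]
      calc (∫ v, ms * ‖v‖ ^ 2 / 2 * (νsk * (ns * ((2 * Real.pi * (KB * Tsk / ms))
              ^ (-(3:ℝ)/2) * Real.exp (-‖v - usk‖ ^ 2 / (2 * (KB * Tsk / ms)))) - fs v)))
          = ∫ v, ms * νsk / 2 * (ns * (‖v‖ ^ 2 * ((2 * Real.pi * (KB * Tsk / ms))
              ^ (-(3:ℝ)/2) * Real.exp (-‖v - usk‖ ^ 2 / (2 * (KB * Tsk / ms)))))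
              - ‖v‖ ^ 2 * fs v) := by
            exact integral_congr_ae (Filter.Eventually.of_forall fun v => by ring)
        _ = ms * νsk / 2 * ∫ v, (ns * (‖v‖ ^ 2 * ((2 * Real.pi * (KB * Tsk / ms))
              ^ (-(3:ℝ)/2) * Real.exp (-‖v - usk‖ ^ 2 / (2 * (KB * Tsk / ms)))))
              - ‖v‖ ^ 2 * fs v) := integral_const_mul _ _
        _ = ms * νsk / 2 * ((∫ v, ns * (‖v‖ ^ 2 * ((2 * Real.pi * (KB * Tsk / ms))
              ^ (-(3:ℝ)/2) * Real.exp (-‖v - usk‖ ^ 2 / (2 * (KB * Tsk / ms))))))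
              - ∫ v, ‖v‖ ^ 2 * fs v) := by
            rw [integral_sub (Mint.const_mul ns) hfv2int]
        _ = ms * νsk / 2 * (ns * (‖usk‖ ^ 2 + 3 * (KB * Tsk / ms))
              - (ns * ‖us‖ ^ 2 + 3 * ns * KB * Ts / ms)) := by
            rw [integral_const_mul, Mval, hf2]
    rw [key, hSsk, hinner, husk2]
    rw [hsub] at hTsk
    rw [hTsk, hνsk, hb, hγ, ha]
    field_simp
    ring
  · intro h
    have hcomm : (⟪mk • uk + ms • us, us - uk⟫ : ℝ) = -⟪ms • us + mk • uk, uk - us⟫ := by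
      rw [show us - uk = -(uk - us) from (neg_sub uk us).symm, inner_neg_right,
        add_comm (mk • uk)]
    rw [hSsk, hSks, h, hcomm]
    ring
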